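/- Let μ > 0, A ∈ ℝ^{m×n}, Q = μI + [[0, Aᵀ],[−A, 0]], and write G_new = −I + L + U where L and U are the strictly lower and strictly upper triangular parts of G_new = [[−I, I],[0, −Q/μ]]. For step size α > 0 define Ĝ = [(1+α)I − αL]⁻¹(I + αU). If 0 < α ≤ 2μ/‖A‖, then the spectral radius of Ĝ equals 1/(1+α). -/

import Mathlib

open Matrix

/-- The matrix `Q = μI + [[0, Aᵀ],[−A, 0]]` of the quadratic game. -/
noncomputable def Qgame {n m : ℕ} (μ : ℝ) (A : Matrix (Fin m) (Fin n) ℝ) :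
    Matrix (Fin n ⊕ Fin m) (Fin n ⊕ Fin m) ℝ :=
  μ • (1 : Matrix (Fin n ⊕ Fin m) (Fin n ⊕ Fin m) ℝ) + Matrix.fromBlocks 0 Aᵀ (-A) 0

/-- The strictly lower triangular part `L` of `G_new = [[−I, I],[0, −Q/μ]]`. -/
noncomputable def GnewLower {n m : ℕ} (μ : ℝ) (A : Matrix (Fin m) (Fin n) ℝ) :
    Matrix ((Fin n ⊕ Fin m) ⊕ (Fin n ⊕ Fin m)) ((Fin n ⊕ Fin m) ⊕ (Fin n ⊕ Fin m)) ℝ :=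
  Matrix.fromBlocks 0 0 0 (Matrix.fromBlocks 0 0 (μ⁻¹ • A) 0)

/-- The strictly upper triangular part `U` of `G_new = [[−I, I],[0, −Q/μ]]`. -/
noncomputable def GnewUpper {n m : ℕ} (μ : ℝ) (A : Matrix (Fin m) (Fin n) ℝ) :
    Matrix ((Fin n ⊕ Fin m) ⊕ (Fin n ⊕ Fin m)) ((Fin n ⊕ Fin m) ⊕ (Fin n ⊕ Fin m)) ℝ :=
  Matrix.fromBlocks 0 1 0 (Matrix.fromBlocks 0 (-(μ⁻¹ • Aᵀ)) 0 0)

/-- The spectral (ℓ²-operator) norm of a real matrix. -/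
noncomputable def matSpectralNorm {n m : ℕ} (A : Matrix (Fin m) (Fin n) ℝ) : ℝ :=
  ‖LinearMap.toContinuousLinearMap (Matrix.toEuclideanLin A)‖

lemma GS.Lsq {n m : ℕ} (μ : ℝ) (A : Matrix (Fin m) (Fin n) ℝ) :
    GnewLower μ A * GnewLower μ A = 0 := by
  simp [GnewLower, Matrix.fromBlocks_multiply]

lemma GS.MNinv {n m : ℕ} (μ : ℝ) (A : Matrix (Fin m) (Fin n) ℝ) (α : ℝ) (hα : 0 < α) :
    ((1 + α) • (1 : Matrix ((Fin n ⊕ Fin m) ⊕ (Fin n ⊕ Fin m))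
              ((Fin n ⊕ Fin m) ⊕ (Fin n ⊕ Fin m)) ℝ) - α • GnewLower μ A)
    * ((1+α)⁻¹ • 1 + (α * ((1+α)⁻¹)^2) • GnewLower μ A) = 1 := by
  have h1 : (1:ℝ) + α ≠ 0 := by positivity
  simp only [Matrix.sub_mul, Matrix.smul_mul, Matrix.mul_add, Matrix.mul_smul,
    Matrix.one_mul, Matrix.mul_one, GS.Lsq, smul_zero, add_zero]
  match_scalars
  all_goals (field_simp; try ring)

lemma GS.Minv {n m : ℕ} (μ : ℝ) (A : Matrix (Fin m) (Fin n) ℝ) (α : ℝ) (hα : 0 < α) :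
    ((1 + α) • (1 : Matrix ((Fin n ⊕ Fin m) ⊕ (Fin n ⊕ Fin m))
              ((Fin n ⊕ Fin m) ⊕ (Fin n ⊕ Fin m)) ℝ) - α • GnewLower μ A)⁻¹
    = (1+α)⁻¹ • 1 + (α * ((1+α)⁻¹)^2) • GnewLower μ A :=
  Matrix.inv_eq_right_inv (GS.MNinv μ A α hα)

lemma GS.quad_aux (a b T N : ℝ) (hN : 0 < N) (hT : 0 ≤ T) (hT4 : T ≤ 4*N)
    (h1 : ((1-a)^2 - b^2)*N + T*a = 0) (h2 : b*(T - 2*(1-a)*N) = 0) :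
    a^2 + b^2 ≤ 1 := by
  rcases mul_eq_zero.mp h2 with hb | hTe
  · subst hb
    by_contra h
    push_neg at h
    simp only [ne_eq, OfNat.ofNat_ne_zero, not_false_eq_true, zero_pow, add_zero] at h
    rcases le_or_gt a 0 with ha | ha
    · have ha1 : a < -1 := by nlinarith
      have h5 : (4*N - T)*a ≤ 0 := mul_nonpos_of_nonneg_of_nonpos (by linarith) ha
      nlinarith [mul_pos hN (show (0:ℝ) < (1+a)^2 by nlinarith)]
    · have ha1 : 1 < a := by nlinarith
      nlinarith [mul_pos hN (show (0:ℝ) < (1-a)^2 by nlinarith), mul_nonneg hT ha.le]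
  · have : T = 2*(1-a)*N := by linarith
    subst this
    nlinarith

lemma GS.mulVec_sq_le {n m : ℕ} (A : Matrix (Fin m) (Fin n) ℝ) (x : Fin n → ℝ) :
    ∑ i, (A.mulVec x i)^2 ≤ (matSpectralNorm A)^2 * ∑ j, (x j)^2 := by
  set f := LinearMap.toContinuousLinearMap (Matrix.toEuclideanLin A)
  have hx : ‖f ((WithLp.equiv 2 (Fin n → ℝ)).symm x)‖ ≤ matSpectralNorm A * ‖(WithLp.equiv 2 (Fin n → ℝ)).symm x‖ :=
    f.le_opNorm _
  have hfx : f ((WithLp.equiv 2 (Fin n → ℝ)).symm x) = (WithLp.equiv 2 (Fin m → ℝ)).symm (A.mulVec x) := by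
    rfl
  rw [hfx] at hx
  have h1 : ‖(WithLp.equiv 2 (Fin m → ℝ)).symm (A.mulVec x)‖^2 = ∑ i, (A.mulVec x i)^2 := by
    rw [EuclideanSpace.norm_eq, Real.sq_sqrt (by positivity)]
    simp [sq_abs]
  have h2 : ‖(WithLp.equiv 2 (Fin n → ℝ)).symm x‖^2 = ∑ j, (x j)^2 := by
    rw [EuclideanSpace.norm_eq, Real.sq_sqrt (by positivity)]
    simp [sq_abs]
  calc ∑ i, (A.mulVec x i)^2 = ‖(WithLp.equiv 2 (Fin m → ℝ)).symm (A.mulVec x)‖^2 := h1.symm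
    _ ≤ (matSpectralNorm A * ‖(WithLp.equiv 2 (Fin n → ℝ)).symm x‖)^2 :=
        pow_le_pow_left₀ (norm_nonneg _) hx 2
    _ = (matSpectralNorm A)^2 * ∑ j, (x j)^2 := by rw [mul_pow, h2]

lemma GS.key {n m : ℕ} (μ α : ℝ) (hμ : 0 < μ) (hα : 0 < α) (A : Matrix (Fin m) (Fin n) ℝ)
    (hK : α * matSpectralNorm A ≤ 2 * μ)
    (l : ℂ) (hl : 1 < ‖l‖ * (1+α))
    (q₁ : Fin n → ℂ) (q₂ : Fin m → ℂ)
    (h2 : ∀ j, (1 - l*(1+α)) * q₁ j = (α/μ : ℝ) * ∑ i, (A i j : ℂ) * q₂ i)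
    (h3 : ∀ i, (1 - l*(1+α)) * q₂ i = -(l*(α/μ : ℝ)) * ∑ j, (A i j : ℂ) * q₁ j) :
    (∀ j, q₁ j = 0) ∧ (∀ i, q₂ i = 0) := by
  have hα1 : (0:ℝ) < 1 + α := by linarith
  set c : ℝ := α/μ with hc
  have hcpos : 0 < c := div_pos hα hμ
  set w : ℂ := l * (1+α : ℝ) with hw
  have hwl : (l*(1+α) : ℂ) = w := by push_cast [hw]; ring
  have hwnorm : 1 < ‖w‖ := by
    rw [hw, norm_mul, Complex.norm_real, Real.norm_eq_abs, abs_of_pos hα1]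
    exact hl
  have hs : (1 - l*(1+α)) = 1 - w := by rw [hwl]
  set s : ℂ := 1 - w with hsdef
  rw [hs] at h2 h3
  have hsne : s ≠ 0 := by
    intro h0
    have : w = 1 := by rw [hsdef] at h0; linear_combination -h0
    rw [this] at hwnorm; simp at hwnorm
  set u : Fin m → ℂ := fun i => ∑ j, (A i j:ℂ) * q₁ j with hu
  set N1 : ℝ := ∑ j, Complex.normSq (q₁ j) with hN1
  set E : ℝ := ∑ i, Complex.normSq (u i) with hE
  have hN1nonneg : 0 ≤ N1 := Finset.sum_nonneg fun j _ => Complex.normSq_nonneg _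
  have hEnonneg : 0 ≤ E := Finset.sum_nonneg fun i _ => Complex.normSq_nonneg _
  -- Step 1 : s^2 * N1 = -(l*c^2) * E
  have step1 : s^2 * (N1:ℂ) = -(l * (c:ℂ)^2) * (E:ℂ) := by
    have hconju : ∀ i, (starRingEnd ℂ) (u i) = ∑ j, (A i j:ℂ) * (starRingEnd ℂ) (q₁ j) := by
      intro i
      rw [hu]
      simp only
      rw [map_sum]
      exact Finset.sum_congr rfl fun j _ => by rw [_root_.map_mul, Complex.conj_ofReal]
    have hcast : (N1:ℂ) = ∑ j, (starRingEnd ℂ) (q₁ j) * q₁ j := by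
      rw [hN1]
      push_cast
      exact Finset.sum_congr rfl fun j _ => by rw [← Complex.normSq_eq_conj_mul_self]
    have hcastE : (E:ℂ) = ∑ i, (starRingEnd ℂ) (u i) * u i := by
      rw [hE]; push_cast
      exact Finset.sum_congr rfl fun i _ => by rw [← Complex.normSq_eq_conj_mul_self]
    calc s^2 * (N1:ℂ) = ∑ j, (starRingEnd ℂ) (q₁ j) * (s * (s * q₁ j)) := by
          rw [hcast, Finset.mul_sum]
          exact Finset.sum_congr rfl fun j _ => by ring
      _ = ∑ j, (starRingEnd ℂ) (q₁ j) * (s * ((c:ℂ) * ∑ i, (A i j : ℂ) * q₂ i)) :=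
          Finset.sum_congr rfl fun j _ => by rw [h2 j]
      _ = ∑ j, ∑ i, (starRingEnd ℂ) (q₁ j) * ((c:ℂ) * ((A i j : ℂ) * (s * q₂ i))) := by
          refine Finset.sum_congr rfl fun j _ => ?_
          rw [show (∑ i, (starRingEnd ℂ) (q₁ j) * ((c:ℂ) * ((A i j : ℂ) * (s * q₂ i))))
              = ((starRingEnd ℂ) (q₁ j) * ((c:ℂ) * s)) * ∑ i, (A i j : ℂ) * q₂ i from by
            rw [Finset.mul_sum]
            exact Finset.sum_congr rfl fun i _ => by ring]
          ring
      _ = ∑ j, ∑ i, (starRingEnd ℂ) (q₁ j) * ((c:ℂ) * ((A i j : ℂ) * (-(l*(c:ℂ)) * u i))) :=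
          Finset.sum_congr rfl fun j _ => Finset.sum_congr rfl fun i _ => by rw [h3 i]
      _ = ∑ i, (-(l * (c:ℂ)^2) * u i) * (starRingEnd ℂ) (u i) := by
          rw [Finset.sum_comm]
          refine Finset.sum_congr rfl fun i _ => ?_
          rw [hconju i]
          rw [show ((-(l * (c:ℂ)^2) * u i) * ∑ j, (A i j:ℂ) * (starRingEnd ℂ) (q₁ j))
              = ∑ j, (-(l * (c:ℂ)^2) * u i) * ((A i j:ℂ) * (starRingEnd ℂ) (q₁ j)) from
            Finset.mul_sum _ _ _]
          exact Finset.sum_congr rfl fun j _ => by ring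
      _ = -(l * (c:ℂ)^2) * (E:ℂ) := by
          rw [hcastE, Finset.mul_sum]
          exact Finset.sum_congr rfl fun i _ => by ring
  -- Step 2 : E ≤ K^2 * N1
  have step2 : E ≤ (matSpectralNorm A)^2 * N1 := by
    set x : Fin n → ℝ := fun j => (q₁ j).re with hx
    set y : Fin n → ℝ := fun j => (q₁ j).im with hy
    have hure : ∀ i, (u i).re = A.mulVec x i := by
      intro i
      rw [hu]
      simp [Complex.re_sum, Matrix.mulVec, dotProduct, Complex.mul_re, hx]
    have huim : ∀ i, (u i).im = A.mulVec y i := by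
      intro i
      rw [hu]
      simp [Complex.im_sum, Matrix.mulVec, dotProduct, Complex.mul_im, hy]
    have hEeq : E = (∑ i, (A.mulVec x i)^2) + ∑ i, (A.mulVec y i)^2 := by
      rw [hE, ← Finset.sum_add_distrib]
      exact Finset.sum_congr rfl fun i _ => by
        rw [Complex.normSq_apply, hure i, huim i]; ring
    have hN1eq : N1 = (∑ j, (x j)^2) + ∑ j, (y j)^2 := by
      rw [hN1, ← Finset.sum_add_distrib]
      exact Finset.sum_congr rfl fun j _ => by
        rw [Complex.normSq_apply]; ring
    rw [hEeq, hN1eq, mul_add]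
    exact add_le_add (GS.mulVec_sq_le A x) (GS.mulVec_sq_le A y)
  -- Step 3 : q₁ = 0
  have hq1 : ∀ j, q₁ j = 0 := by
    by_contra hcon
    push_neg at hcon
    obtain ⟨j₀, hj₀⟩ := hcon
    have hN1pos : 0 < N1 := by
      rw [hN1]
      apply Finset.sum_pos' (fun j _ => Complex.normSq_nonneg _)
      exact ⟨j₀, Finset.mem_univ _, Complex.normSq_pos.mpr hj₀⟩
    set T : ℝ := c^2 * E / (1+α) with hT
    have hTnonneg : 0 ≤ T := by positivity
    have hT4 : T ≤ 4 * N1 := by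
      rw [hT, div_le_iff₀ hα1]
      have hcK : c * matSpectralNorm A ≤ 2 := by
        rw [hc, div_mul_eq_mul_div, div_le_iff₀ hμ]
        linarith
      have hKnn : 0 ≤ matSpectralNorm A := norm_nonneg _
      nlinarith [step2, mul_le_mul hcK hcK (by positivity) (by norm_num : (0:ℝ) ≤ 2)]
    have EQ : (1-w)^2 * (N1:ℂ) + w * (T:ℂ) = 0 := by
      rw [← hsdef]
      rw [step1]
      have hne : (1+(α:ℂ)) ≠ 0 := by
        intro h
        have := congrArg Complex.re h
        simp at this
        linarith
      have : w * (T:ℂ) = l * (c:ℂ)^2 * (E:ℂ) := by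
        rw [hw, hT]
        push_cast
        field_simp
      rw [this]; ring
    set a : ℝ := w.re with ha
    set b : ℝ := w.im with hb
    have hre0 := congrArg Complex.re EQ
    have him0 := congrArg Complex.im EQ
    simp only [pow_two, Complex.add_re, Complex.add_im, Complex.mul_re, Complex.mul_im,
      Complex.sub_re, Complex.sub_im, Complex.one_re, Complex.one_im, Complex.ofReal_re,
      Complex.ofReal_im, Complex.zero_re, Complex.zero_im, mul_zero, zero_mul, sub_zero,
      add_zero, zero_add, ← ha, ← hb] at hre0 him0
    have hquad := GS.quad_aux a b T N1 hN1pos hTnonneg hT4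
      (by linear_combination hre0) (by linear_combination him0)
    have habs : ‖w‖^2 = a^2 + b^2 := by
      rw [Complex.sq_norm, Complex.normSq_apply, ha, hb]
      ring
    nlinarith [hwnorm, habs, hquad]
  refine ⟨hq1, fun i => ?_⟩
  have := h3 i
  rw [Finset.sum_congr rfl fun j _ => by rw [hq1 j, mul_zero]] at this
  rw [Finset.sum_const_zero, mul_zero] at this
  exact (mul_eq_zero.mp this).resolve_left hsne

lemma GS.eig_vanish {n m : ℕ} (μ α : ℝ) (hμ : 0 < μ) (hα : 0 < α)
    (A : Matrix (Fin m) (Fin n) ℝ) (hK : α * matSpectralNorm A ≤ 2 * μ)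
    (l : ℂ) (hl : 1 < ‖l‖ * (1+α))
    (v : ((Fin n ⊕ Fin m) ⊕ (Fin n ⊕ Fin m)) → ℂ)
    (hWv : ((1 + α • GnewUpper μ A).map Complex.ofReal).mulVec v
        = l • (((1 + α) • (1 : Matrix ((Fin n ⊕ Fin m) ⊕ (Fin n ⊕ Fin m))
              ((Fin n ⊕ Fin m) ⊕ (Fin n ⊕ Fin m)) ℝ) - α • GnewLower μ A).map Complex.ofReal).mulVec v) :
    v = 0 := by
  have hα1 : (0:ℝ) < 1 + α := by linarith
  have h1 : ∀ s : Fin n ⊕ Fin m,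
      v (Sum.inl s) + (α:ℂ) * v (Sum.inr s) = l * ((1 + (α:ℂ)) * v (Sum.inl s)) := by
    intro s
    have h := congrFun hWv (Sum.inl s)
    simpa [Matrix.mulVec, dotProduct, Fintype.sum_sum_type, GnewUpper, GnewLower,
      Matrix.fromBlocks, Matrix.one_apply, Matrix.map_apply, Finset.mul_sum,
      apply_ite Complex.ofReal, ite_mul] using h
  set q₁ : Fin n → ℂ := fun j => v (Sum.inr (Sum.inl j)) with hq₁def
  set q₂ : Fin m → ℂ := fun i => v (Sum.inr (Sum.inr i)) with hq₂def
  have h2 : ∀ j, (1 - l*(1+(α:ℂ))) * q₁ j = ((α/μ : ℝ) : ℂ) * ∑ i, (A i j : ℂ) * q₂ i := by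
    intro j
    have h := congrFun hWv (Sum.inr (Sum.inl j))
    simp [Matrix.mulVec, dotProduct, Fintype.sum_sum_type, GnewUpper, GnewLower,
      Matrix.fromBlocks, Matrix.one_apply, Matrix.map_apply, Finset.mul_sum,
      apply_ite Complex.ofReal, ite_mul, Sum.elim_inl, Sum.elim_inr] at h
    have hsum : ((α/μ : ℝ):ℂ) * ∑ i, (A i j:ℂ) * q₂ i
        = ∑ x, (α:ℂ) * (((μ:ℂ))⁻¹ * (A x j:ℂ)) * q₂ x := by
      rw [Finset.mul_sum]
      refine Finset.sum_congr rfl fun i _ => ?_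
      push_cast
      ring
    rw [hsum]
    linear_combination h
  have h3 : ∀ i, (1 - l*(1+(α:ℂ))) * q₂ i = -(l*((α/μ : ℝ):ℂ)) * ∑ j, (A i j : ℂ) * q₁ j := by
    intro i
    have h := congrFun hWv (Sum.inr (Sum.inr i))
    simp [Matrix.mulVec, dotProduct, Fintype.sum_sum_type, GnewUpper, GnewLower,
      Matrix.fromBlocks, Matrix.one_apply, Matrix.map_apply, Finset.mul_sum,
      apply_ite Complex.ofReal, ite_mul, Sum.elim_inl, Sum.elim_inr] at h
    have hsum : (l * ((α/μ : ℝ):ℂ)) * ∑ j, (A i j:ℂ) * q₁ j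
        = l * ∑ x, (α:ℂ) * (((μ:ℂ))⁻¹ * (A i x:ℂ)) * q₁ x := by
      rw [Finset.mul_sum, Finset.mul_sum]
      refine Finset.sum_congr rfl fun j _ => ?_
      push_cast
      ring
    have : (1 - l*(1+(α:ℂ))) * q₂ i = -(l * ∑ x, (α:ℂ) * (((μ:ℂ))⁻¹ * (A i x:ℂ)) * q₁ x) := by
      linear_combination h
    rw [this, ← hsum]
    ring
  obtain ⟨hq1, hq2⟩ := GS.key μ α hμ hα A hK l hl q₁ q₂ h2 h3
  have hsne : (1 : ℂ) - l*(1+(α:ℂ)) ≠ 0 := by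
    intro h0
    have : l * (1+(α:ℂ)) = 1 := by linear_combination -h0
    have hnorm := congrArg norm this
    rw [norm_mul] at hnorm
    have : ‖(1+(α:ℂ))‖ = 1 + α := by
      rw [show (1+(α:ℂ)) = ((1+α : ℝ) : ℂ) by push_cast; ring, Complex.norm_real,
        Real.norm_eq_abs, abs_of_pos hα1]
    rw [this, norm_one] at hnorm
    nlinarith [hl]
  funext r
  rcases r with s | s
  · have h1s := h1 s
    have hvz : v (Sum.inr s) = 0 := by
      rcases s with j | i
      · exact hq1 j
      · exact hq2 i
    rw [hvz, mul_zero, add_zero] at h1s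
    have h0 : (1 - l*(1+(α:ℂ))) * v (Sum.inl s) = 0 := by linear_combination h1s
    have := (mul_eq_zero.mp h0).resolve_left hsne
    simpa using this
  · rcases s with j | i
    · simpa using hq1 j
    · simpa using hq2 i
/-- For the Gauss–Seidel splitting `Ĝ = [(1+α)I − αL]⁻¹ (I + αU)` of
`G_new = −I + L + U`, if `0 < α ≤ 2μ/‖A‖` then `ρ(Ĝ) = 1/(1+α)`. -/
theorem spectral_radius_gauss_seidel {n m : ℕ} (μ : ℝ) (hμ : 0 < μ)
    (A : Matrix (Fin m) (Fin n) ℝ) (α : ℝ)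
    (hα : 0 < α) (hα2 : α ≤ 2 * μ / matSpectralNorm A) :
    spectralRadius ℂ
        (((((1 + α) • (1 : Matrix ((Fin n ⊕ Fin m) ⊕ (Fin n ⊕ Fin m))
              ((Fin n ⊕ Fin m) ⊕ (Fin n ⊕ Fin m)) ℝ) - α • GnewLower μ A)⁻¹)
          * (1 + α • GnewUpper μ A)).map Complex.ofReal) =
      ENNReal.ofReal (1 / (1 + α)) := by
  have hα1 : (0:ℝ) < 1 + α := by linarith
  have hKnn : 0 ≤ matSpectralNorm A := norm_nonneg _
  have hKpos : 0 < matSpectralNorm A := by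
    rcases hKnn.lt_or_eq with h | h
    · exact h
    · exfalso
      rw [← h, div_zero] at hα2
      linarith
  have hK : α * matSpectralNorm A ≤ 2 * μ := (le_div_iff₀ hKpos).mp hα2
  have hn0 : n ≠ 0 := by
    rintro rfl
    have hz : (LinearMap.toContinuousLinearMap (Matrix.toEuclideanLin A)) = 0 := by
      ext x
      have hx : x = 0 := by ext i; exact Fin.elim0 i
      rw [hx]
      simp
    rw [matSpectralNorm, hz, norm_zero] at hKpos
    exact lt_irrefl _ hKpos
  have j₀ : Fin n := ⟨0, Nat.pos_of_ne_zero hn0⟩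
  rw [GS.Minv μ A α hα]
  set Ninv : Matrix ((Fin n ⊕ Fin m) ⊕ (Fin n ⊕ Fin m)) ((Fin n ⊕ Fin m) ⊕ (Fin n ⊕ Fin m)) ℝ :=
    (1+α)⁻¹ • 1 + (α * ((1+α)⁻¹)^2) • GnewLower μ A with hNinvdef
  set M : Matrix ((Fin n ⊕ Fin m) ⊕ (Fin n ⊕ Fin m)) ((Fin n ⊕ Fin m) ⊕ (Fin n ⊕ Fin m)) ℝ :=
    (1 + α) • 1 - α • GnewLower μ A with hMdef
  set W : Matrix ((Fin n ⊕ Fin m) ⊕ (Fin n ⊕ Fin m)) ((Fin n ⊕ Fin m) ⊕ (Fin n ⊕ Fin m)) ℝ :=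
    1 + α • GnewUpper μ A with hWdef
  have hMNinv : M * Ninv = 1 := GS.MNinv μ A α hα
  have hNinvM : Ninv * M = 1 := mul_eq_one_comm.mp hMNinv
  set Mc := M.map Complex.ofReal with hMcdef
  set Ninvc := Ninv.map Complex.ofReal with hNcdef
  set Wc := W.map Complex.ofReal with hWcdef
  set Gc := (Ninv * W).map Complex.ofReal with hGcdef
  have hmapone : ((1 : Matrix ((Fin n ⊕ Fin m) ⊕ (Fin n ⊕ Fin m)) ((Fin n ⊕ Fin m) ⊕ (Fin n ⊕ Fin m)) ℝ)).map Complex.ofReal = 1 :=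
    Matrix.map_one _ Complex.ofReal_zero Complex.ofReal_one
  have hGc : Gc = Ninvc * Wc := Matrix.map_mul (f := Complex.ofRealHom)
  have hMcN : Mc * Ninvc = 1 := by
    have h : Mc * Ninvc = (M * Ninv).map Complex.ofReal :=
      (Matrix.map_mul (f := Complex.ofRealHom)).symm
    rw [h, hMNinv]
    exact hmapone
  have hNMc : Ninvc * Mc = 1 := by
    have h : Ninvc * Mc = (Ninv * M).map Complex.ofReal :=
      (Matrix.map_mul (f := Complex.ofRealHom)).symm
    rw [h, hNinvM]
    exact hmapone
  have hMcGc : Mc * Gc = Wc := by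
    rw [hGc, ← Matrix.mul_assoc, hMcN, Matrix.one_mul]
  -- eigenvalue bound
  have heig : ∀ (l : ℂ) (v : ((Fin n ⊕ Fin m) ⊕ (Fin n ⊕ Fin m)) → ℂ),
      Gc.mulVec v = l • v → 1 < ‖l‖ * (1+α) → v = 0 := by
    intro l v hGv hlnorm
    have hWv : Wc.mulVec v = l • Mc.mulVec v := by
      calc Wc.mulVec v = (Mc * Gc).mulVec v := by rw [hMcGc]
        _ = Mc.mulVec (Gc.mulVec v) := by rw [← Matrix.mulVec_mulVec]
        _ = Mc.mulVec (l • v) := by rw [hGv]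
        _ = l • Mc.mulVec v := Matrix.mulVec_smul Mc l v
    exact GS.eig_vanish μ α hμ hα A hK l hlnorm v hWv
  have hbound : ∀ l ∈ spectrum ℂ Gc, ‖l‖ ≤ 1/(1+α) := by
    intro l hl
    by_contra hcon
    push_neg at hcon
    have hlnorm : 1 < ‖l‖ * (1+α) := by
      rw [div_lt_iff₀ hα1] at hcon
      linarith
    rw [spectrum.mem_iff] at hl
    have hdet : (algebraMap ℂ (Matrix ((Fin n ⊕ Fin m) ⊕ (Fin n ⊕ Fin m)) ((Fin n ⊕ Fin m) ⊕ (Fin n ⊕ Fin m)) ℂ) l - Gc).det = 0 := by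
      by_contra hd
      exact hl ((Matrix.isUnit_iff_isUnit_det _).mpr (Ne.isUnit hd))
    obtain ⟨v, hv0, hveq⟩ := (Matrix.exists_mulVec_eq_zero_iff).mpr hdet
    have hGv : Gc.mulVec v = l • v := by
      rw [Algebra.algebraMap_eq_smul_one, Matrix.sub_mulVec, Matrix.smul_mulVec,
        Matrix.one_mulVec, sub_eq_zero] at hveq
      exact hveq.symm
    exact hv0 (heig l v hGv hlnorm)
  -- membership of 1/(1+α)
  set v₀ : ((Fin n ⊕ Fin m) ⊕ (Fin n ⊕ Fin m)) → ℂ :=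
    fun r => if r = Sum.inl (Sum.inl j₀) then 1 else 0 with hv₀def
  have hv₀ne : v₀ ≠ 0 := by
    intro h
    have := congrFun h (Sum.inl (Sum.inl j₀))
    simp [hv₀def] at this
  have claimW : Wc.mulVec v₀ = v₀ := by
    funext r
    rcases r with s | s <;>
    · simp [hWcdef, hWdef, hv₀def, Matrix.mulVec, dotProduct, Fintype.sum_sum_type,
        GnewUpper, Matrix.fromBlocks, Matrix.one_apply, Matrix.map_apply, apply_ite Complex.ofReal,
        ite_mul, mul_ite, Sum.elim_inl, Sum.elim_inr]
  have claimM : Mc.mulVec v₀ = ((1+α : ℝ) : ℂ) • v₀ := by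
    funext r
    rcases r with s | s <;>
    · simp [hMcdef, hMdef, hv₀def, Matrix.mulVec, dotProduct, Fintype.sum_sum_type,
        GnewLower, Matrix.fromBlocks, Matrix.one_apply, Matrix.map_apply, apply_ite Complex.ofReal,
        ite_mul, mul_ite, Sum.elim_inl, Sum.elim_inr]
  have hne : ((1+α : ℝ) : ℂ) ≠ 0 := by
    simp only [ne_eq, Complex.ofReal_eq_zero]
    linarith
  have hGv₀ : Gc.mulVec v₀ = (((1+α)⁻¹ : ℝ) : ℂ) • v₀ := by
    have e1 : Gc.mulVec v₀ = Ninvc.mulVec v₀ := by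
      rw [hGc, ← Matrix.mulVec_mulVec, claimW]
    have e2 : ((1+α : ℝ) : ℂ) • Ninvc.mulVec v₀ = v₀ := by
      calc ((1+α : ℝ) : ℂ) • Ninvc.mulVec v₀ = Ninvc.mulVec (((1+α : ℝ) : ℂ) • v₀) :=
            (Matrix.mulVec_smul Ninvc _ v₀).symm
        _ = Ninvc.mulVec (Mc.mulVec v₀) := by rw [claimM]
        _ = (Ninvc * Mc).mulVec v₀ := by rw [Matrix.mulVec_mulVec]
        _ = v₀ := by rw [hNMc, Matrix.one_mulVec]
    rw [e1]
    have := congrArg (fun z => (((1+α : ℝ) : ℂ))⁻¹ • z) e2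
    simp only [smul_smul, inv_mul_cancel₀ hne, one_smul] at this
    rw [this]
    congr 1
    push_cast
    rfl
  have hmem : ((((1+α)⁻¹ : ℝ)) : ℂ) ∈ spectrum ℂ Gc := by
    rw [spectrum.mem_iff]
    intro hu
    have hdet := (Matrix.isUnit_iff_isUnit_det _).mp hu
    have hzero : (algebraMap ℂ (Matrix ((Fin n ⊕ Fin m) ⊕ (Fin n ⊕ Fin m)) ((Fin n ⊕ Fin m) ⊕ (Fin n ⊕ Fin m)) ℂ) ((((1+α)⁻¹ : ℝ)) : ℂ) - Gc).det = 0 := by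
      rw [← Matrix.exists_mulVec_eq_zero_iff]
      refine ⟨v₀, hv₀ne, ?_⟩
      rw [Algebra.algebraMap_eq_smul_one, Matrix.sub_mulVec, Matrix.smul_mulVec,
        Matrix.one_mulVec, hGv₀, sub_self]
    rw [hzero] at hdet
    simp at hdet
  -- conclusion
  have hrad : spectralRadius ℂ Gc = ⨆ l ∈ spectrum ℂ Gc, (‖l‖₊ : ENNReal) := rfl
  rw [hrad]
  apply le_antisymm
  · refine iSup₂_le fun l hl => ?_
    rw [← enorm_eq_nnnorm, ← ofReal_norm]
    exact ENNReal.ofReal_le_ofReal (hbound l hl)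
  · have hval : ENNReal.ofReal (1/(1+α)) = (‖((((1+α)⁻¹ : ℝ)) : ℂ)‖₊ : ENNReal) := by
      rw [← enorm_eq_nnnorm, ← ofReal_norm, Complex.norm_real, Real.norm_eq_abs,
        abs_of_pos (show (0:ℝ) < (1+α)⁻¹ by positivity), one_div]
    rw [hval]
    exact le_iSup₂ (f := fun l (_ : l ∈ spectrum ℂ Gc) => (‖l‖₊ : ENNReal)) _ hmem
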